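/- arXiv:1901.07921 — 2 statements merged into one kernel-verified Lean document; each statement's English description precedes it below -/
import Mathlib

section
/- Let u: R → U be a ring epimorphism. The class of u-contramodules (R-modules M with Hom_R(U, M) = 0 = Ext^1_R(U, M)) is closed under kernels of morphisms, extensions, and arbitrary products in the category of R-modules. -/
universe u

noncomputable section

open CategoryTheory Limits

/-- The first Ext group of two `R`-modules (as a `ℤ`-module). -/
abbrev ext1 (R : Type u) [Ring R] (X Y : ModuleCat.{u} R) : Type u :=
  ((Ext ℤ (ModuleCat.{u} R) 1).obj (Opposite.op X)).obj Y

/-- `M` is a `u`-contramodule if `Hom_R(U, M) = 0 = Ext¹_R(U, M)`. -/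
def IsUContramodule (R : Type u) [Ring R] (U : Type u) [AddCommGroup U] [Module R U]
    (M : Type u) [AddCommGroup M] [Module R M] : Prop :=
  Subsingleton (U →ₗ[R] M) ∧
    Subsingleton (ext1 R (ModuleCat.of R U) (ModuleCat.of R M))

variable {R : Type u} [Ring R]

lemma isZero_iff_subsingleton (M : ModuleCat.{u} ℤ) : IsZero M ↔ Subsingleton M := by
  constructor
  · intro h
    refine ⟨fun a b => ?_⟩
    have h1 : (𝟙 M : M ⟶ M) = 0 := h.eq_of_src _ _
    calc a = (𝟙 M : M ⟶ M) a := rfl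
      _ = (0 : M ⟶ M) a := by rw [h1]
      _ = (0 : M ⟶ M) b := rfl
      _ = (𝟙 M : M ⟶ M) b := by rw [h1]
      _ = b := rfl
  · intro h
    exact ModuleCat.isZero_of_subsingleton M

lemma subsingleton_ext1_iff (X Y : ModuleCat.{u} R) (P : ProjectiveResolution X) :
    Subsingleton (ext1 R X Y) ↔
      ∀ f : P.complex.X 1 ⟶ Y, P.complex.d 2 1 ≫ f = 0 →
        ∃ g : P.complex.X 0 ⟶ Y, P.complex.d 1 0 ≫ g = f := by
  set C := P.complex.linearYonedaObj ℤ Y with hC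
  have e : ((Ext ℤ (ModuleCat.{u} R) 1).obj (Opposite.op X)).obj Y ≅ C.homology 1 :=
    P.isoExt 1 Y
  have h1 : Subsingleton (ext1 R X Y) ↔ Subsingleton (C.homology 1) :=
    Equiv.subsingleton_congr ((forget (ModuleCat ℤ)).mapIso e).toEquiv
  rw [h1, ← isZero_iff_subsingleton, ← HomologicalComplex.exactAt_iff_isZero_homology,
    C.exactAt_iff' 0 1 2 (by simp) (by simp), ShortComplex.moduleCat_exact_iff]
  constructor
  · intro h f hf
    obtain ⟨g, hg⟩ := h f hf
    exact ⟨g, hg⟩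
  · intro h f hf
    obtain ⟨g, hg⟩ := h f hf
    exact ⟨g, hg⟩

/-- factor a map through an injective map whose range contains the image -/
lemma factor_thru_inj {A B W : Type u} [AddCommGroup A] [AddCommGroup B] [AddCommGroup W]
    [Module R A] [Module R B] [Module R W] (i : A →ₗ[R] B) (hinj : Function.Injective i)
    (h : W →ₗ[R] B) (hmem : ∀ x, h x ∈ LinearMap.range i) :
    ∃ h' : W →ₗ[R] A, i.comp h' = h := by
  refine ⟨(LinearEquiv.ofInjective i hinj).symm.toLinearMap.comp
    (h.codRestrict (LinearMap.range i) hmem), ?_⟩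
  ext x
  have : ∀ y : LinearMap.range i, i ((LinearEquiv.ofInjective i hinj).symm y) = (y : B) := by
    intro y
    conv_rhs => rw [← (LinearEquiv.ofInjective i hinj).apply_symm_apply y]
    rw [LinearEquiv.ofInjective_apply]
  simpa using this ⟨h x, hmem x⟩


set_option maxHeartbeats 2000000 in
/-- for a ring epimorphism `u : R → U`, the class of `u`-contramodules is
closed under kernels of morphisms, extensions, and arbitrary products. -/
theorem stmt9 {R : Type u} [Ring R] {U : Type u} [Ring U] (u : R →+* U)
    [Module R U] (hsmul : ∀ (r : R) (x : U), r • x = u r * x)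
    (hepi : ∀ (T : Type u) [Ring T] (f g : U →+* T), f.comp u = g.comp u → f = g) :
    (∀ (M N : Type u) (_ : AddCommGroup M) (_ : AddCommGroup N)
        (_ : Module R M) (_ : Module R N) (f : M →ₗ[R] N),
        IsUContramodule R U M → IsUContramodule R U N →
        IsUContramodule R U (LinearMap.ker f)) ∧
    (∀ (A B C : Type u) (_ : AddCommGroup A) (_ : AddCommGroup B) (_ : AddCommGroup C)
        (_ : Module R A) (_ : Module R B) (_ : Module R C)
        (i : A →ₗ[R] B) (p : B →ₗ[R] C),
        Function.Injective i → Function.Surjective p →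
        LinearMap.range i = LinearMap.ker p →
        IsUContramodule R U A → IsUContramodule R U C →
        IsUContramodule R U B) ∧
    (∀ (ι : Type u) (M : ι → Type u) (_ : ∀ i, AddCommGroup (M i))
        (_ : ∀ i, Module R (M i)),
        (∀ i, IsUContramodule R U (M i)) →
        IsUContramodule R U ((i : ι) → M i)) := by
  classical
  set X : ModuleCat.{u} R := ModuleCat.of R U with hX
  obtain ⟨P⟩ : Nonempty (ProjectiveResolution X) := HasProjectiveResolution.out
  -- notation
  set d1 : P.complex.X 1 ⟶ P.complex.X 0 := P.complex.d 1 0 with hd1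
  set d2 : P.complex.X 2 ⟶ P.complex.X 1 := P.complex.d 2 1 with hd2
  set π0 : P.complex.X 0 ⟶ X := P.π.f 0 with hπ0
  have hdd : d2 ≫ d1 = 0 := P.complex.d_comp_d 2 1 0
  have hsurj : Function.Surjective π0 :=
    (ModuleCat.epi_iff_surjective (P.π.f 0)).1 inferInstance
  -- exactness at 0 : if π0 x = 0 then x ∈ range d1
  have hexact0 : ∀ x : P.complex.X 0, π0 x = 0 → ∃ y, d1 y = x := by
    have := P.exact₀
    rw [ShortComplex.moduleCat_exact_iff] at this
    exact this
  -- descending along π0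
  have hdesc : ∀ (N : ModuleCat.{u} R) (g : P.complex.X 0 ⟶ N), d1 ≫ g = 0 →
      ∃ h : X ⟶ N, π0 ≫ h = g := by
    intro N g hg
    obtain ⟨l, hl⟩ := CokernelCofork.IsColimit.desc' P.isColimitCokernelCofork g hg
    exact ⟨l, hl⟩
  -- characterization: `E M` iff the Ext¹ group vanishes
  have hchar : ∀ (M : Type u) (_ : AddCommGroup M) (_ : Module R M),
      Subsingleton (ext1 R (ModuleCat.of R U) (ModuleCat.of R M)) ↔
        ∀ f : P.complex.X 1 ⟶ ModuleCat.of R M, d2 ≫ f = 0 →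
          ∃ g : P.complex.X 0 ⟶ ModuleCat.of R M, d1 ≫ g = f := by
    intro M _ _
    exact subsingleton_ext1_iff X (ModuleCat.of R M) P
  refine ⟨?_, ?_, ?_⟩
  · -- kernels
    intro M N aM aN mM mN f hMc hNc
    obtain ⟨hM0, hM1⟩ := hMc
    obtain ⟨hN0, hN1⟩ := hNc
    constructor
    · refine ⟨fun a b => ?_⟩
      have : ∀ h : U →ₗ[R] (LinearMap.ker f), h = 0 := by
        intro h
        ext x
        have h2 : (LinearMap.ker f).subtype.comp h = 0 := Subsingleton.elim _ _
        have := congrArg (fun (φ : U →ₗ[R] M) => φ x) h2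
        simpa using this
      rw [this a, this b]
    · rw [hchar]
      intro φ hφ
      -- φ : P₁ ⟶ ker f ; compose with inclusion
      set ι : (LinearMap.ker f : Type u) →ₗ[R] M := (LinearMap.ker f).subtype with hι
      set φM : P.complex.X 1 ⟶ ModuleCat.of R M := ModuleCat.ofHom (ι.comp φ.hom) with hφM
      have hφM2 : d2 ≫ φM = 0 := by
        ext x
        have := congrArg (fun (ψ : P.complex.X 2 ⟶ ModuleCat.of R (LinearMap.ker f)) => ι (ψ x)) hφ
        simpa [φM] using this
      obtain ⟨g, hg⟩ := (hchar M aM mM).1 hM1 φM hφM2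
      -- f ∘ g kills range d1 = ker π0, so descends to h : U →ₗ N which is 0
      set fg : P.complex.X 0 ⟶ ModuleCat.of R N := ModuleCat.ofHom (f.comp g.hom) with hfg
      have hfgd : d1 ≫ fg = 0 := by
        ext x
        have h1 : g (d1 x) = φM x := congrArg (fun (ψ : P.complex.X 1 ⟶ ModuleCat.of R M) => ψ x) hg
        have h2 : f (φM x) = 0 := (φ x).2
        show f (g (d1 x)) = 0
        rw [h1, h2]
      obtain ⟨h, hh⟩ := hdesc (ModuleCat.of R N) fg hfgd
      have hh0 : h = 0 := ModuleCat.hom_ext (@Subsingleton.elim _ hN0 _ _)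
      have hfg0 : ∀ x, f (g x) = 0 := by
        intro x
        obtain ⟨y, hy⟩ := hsurj (π0 x) -- not needed; use hh directly
        have := congrArg (fun (ψ : P.complex.X 0 ⟶ ModuleCat.of R N) => ψ x) hh
        simp only [hh0] at this
        simpa [hfg] using this.symm
      -- g factors through ker f
      refine ⟨ModuleCat.ofHom (g.hom.codRestrict (LinearMap.ker f) hfg0), ?_⟩
      ext x
      show g (d1 x) = (φ x).1
      have h1 : g (d1 x) = φM x := congrArg (fun (ψ : P.complex.X 1 ⟶ ModuleCat.of R M) => ψ x) hg
      simpa [φM, hι] using h1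
  · -- extensions
    intro A B C aA aB aC mA mB mC i p hinj hsurjp hrange hAc hCc
    obtain ⟨hA0, hA1⟩ := hAc
    obtain ⟨hC0, hC1⟩ := hCc
    have hmemrange : ∀ b : B, p b = 0 → b ∈ LinearMap.range i := by
      intro b hb
      rw [hrange]; exact hb
    constructor
    · refine ⟨fun a b => ?_⟩
      have key : ∀ h : U →ₗ[R] B, h = 0 := by
        intro h
        have hph : p.comp h = 0 := @Subsingleton.elim _ hC0 _ _
        obtain ⟨h', hh'⟩ := factor_thru_inj i hinj h (fun x => hmemrange _ (by
          have := congrArg (fun (ψ : U →ₗ[R] C) => ψ x) hph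
          simpa using this))
        have : h' = 0 := @Subsingleton.elim _ hA0 _ _
        rw [← hh', this]
        ext x; simp
      rw [key a, key b]
    · rw [hchar]
      intro φ hφ
      set φC : P.complex.X 1 ⟶ ModuleCat.of R C := ModuleCat.ofHom (p.comp φ.hom) with hφC
      have hφC2 : d2 ≫ φC = 0 := by
        ext x
        have h2 : φ (d2 x) = 0 := by
          have := congrArg (fun (χ : P.complex.X 2 ⟶ ModuleCat.of R B) => χ x) hφ
          simpa using this
        show p (φ (d2 x)) = 0
        rw [h2, map_zero]
      obtain ⟨gC, hgC⟩ := (hchar C aC mC).1 hC1 φC hφC2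
      have hpepi : Epi (ModuleCat.ofHom p) := (ModuleCat.epi_iff_surjective _).2 hsurjp
      set gB : P.complex.X 0 ⟶ ModuleCat.of R B :=
        Projective.factorThru gC (ModuleCat.ofHom p) with hgB
      have hgBp : gB ≫ ModuleCat.ofHom p = gC := Projective.factorThru_comp _ _
      set ψ : P.complex.X 1 ⟶ ModuleCat.of R B := φ - d1 ≫ gB with hψ
      have hψmem : ∀ x, ψ x ∈ LinearMap.range i := by
        intro x
        apply hmemrange
        have h1 : p (gB (d1 x)) = gC (d1 x) :=
          congrArg (fun (χ : P.complex.X 0 ⟶ ModuleCat.of R C) => χ (d1 x)) hgBp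
        have h2 : gC (d1 x) = φC x :=
          congrArg (fun (χ : P.complex.X 1 ⟶ ModuleCat.of R C) => χ x) hgC
        show p (φ x - gB (d1 x)) = 0
        rw [map_sub, h1, h2]
        exact sub_self _
      obtain ⟨ψ', hψ'⟩ := factor_thru_inj i hinj ψ.hom hψmem
      set ψA : P.complex.X 1 ⟶ ModuleCat.of R A := ModuleCat.ofHom ψ' with hψA
      have hψ'd2 : d2 ≫ ψA = 0 := by
        ext x
        apply hinj
        have h1 : i (ψA (d2 x)) = ψ (d2 x) :=
          congrArg (fun (χ : ↑(P.complex.X 1) →ₗ[R] B) => χ (d2 x)) hψ'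
        have h2 : φ (d2 x) = 0 := by
          have := congrArg (fun (χ : P.complex.X 2 ⟶ ModuleCat.of R B) => χ x) hφ
          simpa using this
        have h3 : gB (d1 (d2 x)) = 0 := by
          have h4 : d1 (d2 x) = (0 : P.complex.X 2 ⟶ P.complex.X 0) x :=
            congrArg (fun (χ : P.complex.X 2 ⟶ P.complex.X 0) => χ x) hdd
          rw [show ((0 : P.complex.X 2 ⟶ P.complex.X 0) x) = 0 from rfl] at h4
          rw [h4, map_zero]
        show i (ψA (d2 x)) = i 0
        rw [h1]
        show φ (d2 x) - gB (d1 (d2 x)) = i 0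
        rw [h2, h3, map_zero]
        simp
      obtain ⟨hA, hhA⟩ := (hchar A aA mA).1 hA1 ψA hψ'd2
      set ψi : P.complex.X 0 ⟶ ModuleCat.of R B := ModuleCat.ofHom (i.comp hA.hom) with hψi
      refine ⟨ψi + gB, ?_⟩
      ext x
      have h1 : hA (d1 x) = ψA x :=
        congrArg (fun (χ : P.complex.X 1 ⟶ ModuleCat.of R A) => χ x) hhA
      have h2 : i (ψA x) = ψ x :=
        congrArg (fun (χ : ↑(P.complex.X 1) →ₗ[R] B) => χ x) hψ'
      have h12 : ψi (d1 x) = ψ x := by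
        show i (hA (d1 x)) = ψ x
        rw [h1, h2]
      show ψi (d1 x) + gB (d1 x) = φ x
      rw [h12]
      show (φ x - gB (d1 x)) + gB (d1 x) = φ x
      abel
  · -- products
    intro ι M aM mM hM
    constructor
    · refine ⟨fun a b => ?_⟩
      have key : ∀ h : U →ₗ[R] (∀ i, M i), h = 0 := by
        intro h
        ext x i
        have hpi : (LinearMap.proj i).comp h = 0 := @Subsingleton.elim _ (hM i).1 _ _
        have := congrArg (fun (ψ : U →ₗ[R] M i) => ψ x) hpi
        simpa using this
      rw [key a, key b]
    · rw [hchar]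
      intro φ hφ
      have hexists : ∀ i, ∃ g : P.complex.X 0 ⟶ ModuleCat.of R (M i),
          d1 ≫ g = (show P.complex.X 1 ⟶ ModuleCat.of R (M i) from
            ModuleCat.ofHom ((LinearMap.proj i).comp φ.hom)) := by
        intro i
        refine ((hchar (M i) (aM i) (mM i)).1 (hM i).2) _ ?_
        ext x
        have h2 : φ (d2 x) = 0 := by
          have := congrArg
            (fun (χ : P.complex.X 2 ⟶ ModuleCat.of R (∀ j, M j)) => χ x) hφ
          simpa using this
        show (φ (d2 x)) i = 0
        rw [h2]
        rfl
      choose g hg using hexists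
      set gP : P.complex.X 0 ⟶ ModuleCat.of R (∀ i, M i) := ModuleCat.ofHom (LinearMap.pi (fun i => (g i).hom)) with hgP
      refine ⟨gP, ?_⟩
      ext x
      rename_i i
      have := congrArg (fun (χ : P.complex.X 1 ⟶ ModuleCat.of R (M i)) => χ x) (hg i)
      show g i (d1 x) = (φ x) i
      simpa using this

end
end

section
/- Let u: R → U be a ring epimorphism and M a u-contramodule. Then Hom_R(Z, M) = 0 = Ext^1_R(Z, M) for every R-module Z which admits a U-module structure. -/
universe u

noncomputable section

section Stmt10Aux
open CategoryTheory

section Generic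
variable {R : Type u} [Ring R]
variable {M A B C : Type u} [AddCommGroup M] [Module R M] [AddCommGroup A] [Module R A]
  [AddCommGroup B] [Module R B] [AddCommGroup C] [Module R C]

def CanExt (M : Type u) [AddCommGroup M] [Module R M] {A B : Type u} [AddCommGroup A] [Module R A]
    [AddCommGroup B] [Module R B] (p : A →ₗ[R] B) : Prop :=
  ∀ h : (LinearMap.ker p) →ₗ[R] M, ∃ g : A →ₗ[R] M, ∀ x : LinearMap.ker p, g x = h x


variable {M A B C : Type u} [AddCommGroup M] [Module R M] [AddCommGroup A] [Module R A]
  [AddCommGroup B] [Module R B] [AddCommGroup C] [Module R C]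

lemma canExt_coprod {p : A →ₗ[R] B} {q : C →ₗ[R] B} (ψ : A →ₗ[R] C)
    (hψ : q.comp ψ = p) (hq : CanExt M q) : CanExt M (p.coprod q) := by
  intro h
  have hψ' : ∀ a, q (ψ a) = p a := fun a => LinearMap.congr_fun hψ a
  let ι : LinearMap.ker q →ₗ[R] LinearMap.ker (p.coprod q) :=
    LinearMap.codRestrict _ ((LinearMap.inr R A C).comp (LinearMap.ker q).subtype)
      (fun c => by simpa [LinearMap.mem_ker] using c.2)
  obtain ⟨g₂, hg₂⟩ := hq (h.comp ι)
  let e : A →ₗ[R] LinearMap.ker (p.coprod q) :=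
    LinearMap.codRestrict _ (LinearMap.prod LinearMap.id (-ψ))
      (fun a => by simp [LinearMap.mem_ker, hψ' a])
  refine ⟨(g₂.comp (ψ.coprod LinearMap.id)) + h.comp (e.comp (LinearMap.fst R A C)), ?_⟩
  rintro ⟨⟨a, c⟩, hx⟩
  have hmem : ψ a + c ∈ LinearMap.ker q := by
    have hx' : p a + q c = 0 := hx
    simp [LinearMap.mem_ker, hψ' a, hx']
  have h1 : g₂ (ψ a + c) = h (ι ⟨ψ a + c, hmem⟩) := hg₂ ⟨ψ a + c, hmem⟩
  have h2 : ι ⟨ψ a + c, hmem⟩ + e a = ⟨(a, c), hx⟩ := by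
    apply Subtype.ext
    show ((0 : A) + a, (ψ a + c) + -ψ a) = (a, c)
    simp [ι, e, Prod.ext_iff]
  calc g₂ (ψ a + c) + h (e a) = h (ι ⟨ψ a + c, hmem⟩ + e a) := by rw [h1, map_add]
    _ = h ⟨(a, c), hx⟩ := by rw [h2]

lemma canExt_of_coprod {p : A →ₗ[R] B} {q : C →ₗ[R] B} (θ : C →ₗ[R] A)
    (hθ : p.comp θ = q) (hr : CanExt M (p.coprod q)) : CanExt M p := by
  intro h
  have hθ' : ∀ c, p (θ c) = q c := fun c => LinearMap.congr_fun hθ c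
  let κ : LinearMap.ker (p.coprod q) →ₗ[R] LinearMap.ker p :=
    LinearMap.codRestrict _ ((LinearMap.id.coprod θ).comp (LinearMap.ker (p.coprod q)).subtype)
      (fun x => by
        obtain ⟨⟨a, c⟩, hx⟩ := x
        have hx' : p a + q c = 0 := hx
        simp [LinearMap.mem_ker, hθ', hx'])
  obtain ⟨g', hg'⟩ := hr (h.comp κ)
  refine ⟨g'.comp (LinearMap.inl R A C), ?_⟩
  rintro ⟨k, hk⟩
  have hmem : ((k, 0) : A × C) ∈ LinearMap.ker (p.coprod q) := by
    simp only [LinearMap.mem_ker, LinearMap.coprod_apply, map_zero, add_zero]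
    exact hk
  have := hg' ⟨(k, 0), hmem⟩
  have hκ : κ ⟨(k, 0), hmem⟩ = ⟨k, hk⟩ := by
    apply Subtype.ext; simp [κ]
  simpa [hκ] using this

lemma CanExt.transfer {p : A →ₗ[R] B} {q : C →ₗ[R] B}
    [Module.Projective R A] [Module.Projective R C]
    (hp : Function.Surjective p) (hqs : Function.Surjective q)
    (hq : CanExt M q) : CanExt M p := by
  obtain ⟨ψ, hψ⟩ := Module.projective_lifting_property q p hqs
  obtain ⟨θ, hθ⟩ := Module.projective_lifting_property p q hp
  exact canExt_of_coprod θ hθ (canExt_coprod ψ hψ hq)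


lemma mem_ker_mapRange {ι : Type u} (p : A →ₗ[R] B) (w : ι →₀ A) :
    w ∈ LinearMap.ker (Finsupp.mapRange.linearMap (α := ι) p) ↔ ∀ x, p (w x) = 0 := by
  constructor
  · intro hw x
    have := DFunLike.congr_fun (LinearMap.mem_ker.mp hw) x
    simpa using this
  · intro hw
    rw [LinearMap.mem_ker]
    ext x
    simpa using hw x

lemma canExt_mapRange {ι : Type u} {p : A →ₗ[R] B} (hp : CanExt M p) :
    CanExt M (Finsupp.mapRange.linearMap (α := ι) p) := by
  intro h
  have hsingle : ∀ (z : ι) (k : A), k ∈ LinearMap.ker p →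
      Finsupp.single z k ∈ LinearMap.ker (Finsupp.mapRange.linearMap (α := ι) p) := by
    intro z k hk
    rw [mem_ker_mapRange]
    intro x
    by_cases hx : x = z
    · subst hx; simpa [Finsupp.single_apply] using hk
    · simp [Finsupp.single_apply, Ne.symm hx]
  let inc : ∀ z : ι, (LinearMap.ker p) →ₗ[R]
      LinearMap.ker (Finsupp.mapRange.linearMap (α := ι) p) :=
    fun z => LinearMap.codRestrict _ ((Finsupp.lsingle z).comp (LinearMap.ker p).subtype)
      (fun k => hsingle z k.1 k.2)
  choose g hg using fun z : ι => hp (h.comp (inc z))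
  refine ⟨Finsupp.lsum ℕ g, ?_⟩
  have main : ∀ (w : ι →₀ A) (hw : w ∈ LinearMap.ker (Finsupp.mapRange.linearMap (α := ι) p)),
      Finsupp.lsum ℕ g w = h ⟨w, hw⟩ := by
    intro w
    induction w using Finsupp.induction with
    | zero =>
      intro hw
      rw [map_zero]
      have hz : (⟨0, hw⟩ : LinearMap.ker (Finsupp.mapRange.linearMap (α := ι) p)) = 0 :=
        Subtype.ext rfl
      rw [hz, map_zero]
    | single_add a b v hav hb ih =>
      intro hw
      have hva : v a = 0 := Finsupp.notMem_support_iff.mp hav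
      have hball : b ∈ LinearMap.ker p := by
        have := (mem_ker_mapRange p _).mp hw a
        simpa [hva] using this
      have hvmem : v ∈ LinearMap.ker (Finsupp.mapRange.linearMap (α := ι) p) := by
        rw [mem_ker_mapRange] at hw ⊢
        intro x
        by_cases hx : x = a
        · subst hx; simp [hva]
        · have := hw x
          simpa [Finsupp.single_apply, Ne.symm hx] using this
      have hsmem := hsingle a b hball
      have split : (⟨Finsupp.single a b + v, hw⟩ :
          LinearMap.ker (Finsupp.mapRange.linearMap (α := ι) p)) =
          ⟨Finsupp.single a b, hsmem⟩ + ⟨v, hvmem⟩ := Subtype.ext rfl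
      rw [split, map_add, map_add, ← ih hvmem]
      congr 1
      rw [Finsupp.lsum_single]
      have h1 := hg a ⟨b, hball⟩
      rw [h1]
      rfl
  rintro ⟨w, hw⟩
  exact main w hw

lemma mapRange_surj {ι : Type u} {p : A →ₗ[R] B} (hp : Function.Surjective p) :
    Function.Surjective (Finsupp.mapRange.linearMap (α := ι) p) := by
  intro w
  induction w using Finsupp.induction with
  | zero => exact ⟨0, map_zero _⟩
  | single_add a b v _ _ ih =>
    obtain ⟨x, hx⟩ := hp b
    obtain ⟨y, hy⟩ := ih
    refine ⟨Finsupp.single a x + y, ?_⟩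
    rw [map_add, hy]
    congr 1
    ext t
    by_cases ht : t = a
    · subst ht; simp [Finsupp.single_apply, hx]
    · simp [Finsupp.single_apply, Ne.symm ht]

lemma canExt_comp {G F Z' : Type u} [AddCommGroup G] [Module R G] [AddCommGroup F] [Module R F]
    [AddCommGroup Z'] [Module R Z'] (σ : G →ₗ[R] F) (ε : F →ₗ[R] Z')
    (hσs : Function.Surjective σ) (hσ : CanExt M σ)
    (hker : ∀ f : ↥(LinearMap.ker ε) →ₗ[R] M, f = 0) : CanExt M (ε.comp σ) := by
  intro h
  have hle : LinearMap.ker σ ≤ LinearMap.ker (ε.comp σ) := by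
    intro x hx
    rw [LinearMap.mem_ker] at hx ⊢
    rw [LinearMap.comp_apply, hx, map_zero]
  obtain ⟨g₁, hg₁⟩ := hσ (h.comp (Submodule.inclusion hle))
  let δ : ↥(LinearMap.ker (ε.comp σ)) →ₗ[R] M := h - g₁.comp (Submodule.subtype _)
  have hτmem : ∀ x : ↥(LinearMap.ker (ε.comp σ)), σ x.1 ∈ LinearMap.ker ε := by
    intro x
    rw [LinearMap.mem_ker]
    exact x.2
  let τ : ↥(LinearMap.ker (ε.comp σ)) →ₗ[R] ↥(LinearMap.ker ε) :=
    LinearMap.codRestrict _ (σ.comp (Submodule.subtype _)) hτmem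
  have hτs : Function.Surjective τ := by
    rintro ⟨k, hk⟩
    obtain ⟨w, hw⟩ := hσs k
    have hwmem : w ∈ LinearMap.ker (ε.comp σ) := by
      rw [LinearMap.mem_ker, LinearMap.comp_apply, hw]
      exact hk
    exact ⟨⟨w, hwmem⟩, Subtype.ext hw⟩
  have hle2 : LinearMap.ker τ ≤ LinearMap.ker δ := by
    intro x hx
    have hσx : σ x.1 = 0 := congrArg Subtype.val (LinearMap.mem_ker.mp hx)
    have hxker : x.1 ∈ LinearMap.ker σ := hσx
    rw [LinearMap.mem_ker]
    have h1 : g₁ x.1 = h (Submodule.inclusion hle ⟨x.1, hxker⟩) := hg₁ ⟨x.1, hxker⟩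
    have hi : (Submodule.inclusion hle ⟨x.1, hxker⟩) = x := Subtype.ext rfl
    show h x - g₁ x.1 = 0
    rw [h1, hi, sub_self]
  let e := LinearMap.quotKerEquivOfSurjective τ hτs
  let θ : ↥(LinearMap.ker ε) →ₗ[R] M := (Submodule.liftQ _ δ hle2).comp e.symm.toLinearMap
  have hθ := hker θ
  have hδ : ∀ x, δ x = 0 := by
    intro x
    have h1 : δ x = (Submodule.liftQ _ δ hle2) (Submodule.Quotient.mk x) :=
      (Submodule.liftQ_apply _ _ _).symm
    rw [h1]
    have h2 : (Submodule.liftQ _ δ hle2) = θ.comp e.toLinearMap := by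
      apply LinearMap.ext
      intro q
      show _ = (Submodule.liftQ _ δ hle2) (e.symm (e q))
      rw [e.symm_apply_apply]
    rw [h2, hθ]
    rfl
  refine ⟨g₁, fun x => ?_⟩
  have := hδ x
  have hsub : h x - g₁ x.1 = 0 := this
  have := sub_eq_zero.mp hsub
  exact this.symm


end Generic

section Bridge
variable {R : Type u} [Ring R]
variable {W N : Type u} [AddCommGroup W] [Module R W] [AddCommGroup N] [Module R N]

lemma subsingleton_iff_isZero (X : ModuleCat.{u} ℤ) : Subsingleton X ↔ Limits.IsZero X := by
  constructor
  · intro h; exact ModuleCat.isZero_of_subsingleton X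
  · intro h
    refine ⟨fun a b => ?_⟩
    have h0 : (𝟙 X : X ⟶ X) = 0 := h.eq_of_src _ _
    have ha : a = 0 := congrArg (fun φ : X ⟶ X => φ.hom a) h0
    have hb : b = 0 := congrArg (fun φ : X ⟶ X => φ.hom b) h0
    rw [ha, hb]

/-- The augmentation map of a projective resolution, as a linear map. -/
def aug (P : ProjectiveResolution (ModuleCat.of R W)) : ↑(P.complex.X 0) →ₗ[R] W := (P.π.f 0).hom

lemma aug_surjective (P : ProjectiveResolution (ModuleCat.of R W)) :
    Function.Surjective (aug P) :=
  (ModuleCat.epi_iff_surjective (P.π.f 0)).mp inferInstance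

lemma range_eq_ker_aug (P : ProjectiveResolution (ModuleCat.of R W)) :
    LinearMap.range (show ↥(P.complex.X 1) →ₗ[R] ↥(P.complex.X 0) from (P.complex.d 1 0).hom) =
      LinearMap.ker (aug P) := by
  have hS : (ShortComplex.mk (P.complex.d 1 0) (P.π.f 0) P.complex_d_comp_π_f_zero).Exact :=
    ShortComplex.exact_of_g_is_cokernel _ P.isColimitCokernelCofork
  exact (ShortComplex.moduleCat_exact_iff_range_eq_ker _).mp hS

lemma res_exact_one (P : ProjectiveResolution (ModuleCat.of R W)) (x : ↥(P.complex.X 1))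
    (hx : P.complex.d 1 0 x = 0) : ∃ y : ↥(P.complex.X 2), P.complex.d 2 1 y = x := by
  have h := P.complex_exactAt_succ 0
  rw [HomologicalComplex.exactAt_iff' _ 2 1 0 (by simp) (by simp)] at h
  exact (ShortComplex.moduleCat_exact_iff _).mp h x hx

lemma subsingleton_ext1_iff_s10 (P : ProjectiveResolution (ModuleCat.of R W)) :
    Subsingleton (ext1 R (ModuleCat.of R W) (ModuleCat.of R N)) ↔ CanExt N (aug P) := by
  have e1 : Subsingleton (ext1 R (ModuleCat.of R W) (ModuleCat.of R N)) ↔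
      Subsingleton ((P.complex.linearYonedaObj ℤ (ModuleCat.of R N)).homology 1) :=
    ((forget _).mapIso (P.isoExt 1 (ModuleCat.of R N))).toEquiv.subsingleton_congr
  rw [e1, subsingleton_iff_isZero,
    ← HomologicalComplex.exactAt_iff_isZero_homology,
    HomologicalComplex.exactAt_iff' _ 0 1 2 (by simp) (by simp),
    ShortComplex.moduleCat_exact_iff]
  show (∀ (f : P.complex.X 1 ⟶ ModuleCat.of R N), P.complex.d 2 1 ≫ f = 0 →
      ∃ g : P.complex.X 0 ⟶ ModuleCat.of R N, P.complex.d 1 0 ≫ g = f) ↔ _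
  have hmem : ∀ y : ↥(P.complex.X 1), P.complex.d 1 0 y ∈ LinearMap.ker (aug P) := by
    intro y
    rw [← range_eq_ker_aug P]
    exact ⟨y, rfl⟩
  constructor
  · -- concrete exactness → CanExt
    intro hex h
    let dres : ↥(P.complex.X 1) →ₗ[R] LinearMap.ker (aug P) :=
      LinearMap.codRestrict _ (show ↥(P.complex.X 1) →ₗ[R] ↥(P.complex.X 0) from
        (P.complex.d 1 0).hom) hmem
    let f : P.complex.X 1 ⟶ ModuleCat.of R N := ModuleCat.ofHom (h.comp dres)
    have hf : P.complex.d 2 1 ≫ f = 0 := by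
      apply ModuleCat.hom_ext
      apply LinearMap.ext
      intro y
      show h (dres ((P.complex.d 2 1).hom y)) = 0
      have h0 : (P.complex.d 1 0).hom
          ((P.complex.d 2 1).hom y) = 0 :=
        LinearMap.congr_fun (congrArg ModuleCat.Hom.hom (P.complex.d_comp_d 2 1 0)) y
      have hz : dres ((P.complex.d 2 1).hom y) = 0 := Subtype.ext h0
      rw [hz, map_zero]
    obtain ⟨g, hg⟩ := hex f hf
    refine ⟨g.hom, ?_⟩
    rintro ⟨x, hx⟩
    have hx' := hx
    rw [← range_eq_ker_aug P] at hx'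
    obtain ⟨y, hy⟩ := hx'
    have := LinearMap.congr_fun (congrArg ModuleCat.Hom.hom hg) y
    have h2 : h (dres y) = h ⟨x, hx⟩ := by
      congr 1
      exact Subtype.ext hy
    calc g.hom x
        = g.hom ((P.complex.d 1 0).hom y) := by rw [hy]
      _ = h (dres y) := this
      _ = h ⟨x, hx⟩ := h2
  · -- CanExt → concrete exactness
    intro hC f hf
    have hker : LinearMap.ker (show ↥(P.complex.X 1) →ₗ[R] ↥(P.complex.X 0) from
        (P.complex.d 1 0).hom) ≤ LinearMap.ker f.hom := by
      intro x hx
      obtain ⟨y, rfl⟩ := res_exact_one P x hx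
      exact LinearMap.congr_fun (congrArg ModuleCat.Hom.hom hf) y
    set d10 := (show ↥(P.complex.X 1) →ₗ[R] ↥(P.complex.X 0) from (P.complex.d 1 0).hom) with hd10
    let h₀ := Submodule.liftQ (LinearMap.ker d10) f.hom hker
    let e := LinearMap.quotKerEquivRange d10
    let h₁ : ↥(LinearMap.range d10) →ₗ[R] N := h₀.comp e.symm.toLinearMap
    let h₂ : ↥(LinearMap.ker (aug P)) →ₗ[R] N :=
      h₁.comp (Submodule.inclusion (range_eq_ker_aug P).ge)
    obtain ⟨g, hg⟩ := hC h₂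
    refine ⟨ModuleCat.ofHom g, ?_⟩
    apply ModuleCat.hom_ext
    apply LinearMap.ext
    intro y
    show g (d10 y) = f.hom y
    have hy : d10 y ∈ LinearMap.ker (aug P) := hmem y
    have hy' : d10 y ∈ LinearMap.range d10 := ⟨y, rfl⟩
    have he : e (Submodule.Quotient.mk y) = ⟨d10 y, hy'⟩ :=
      Subtype.ext (LinearMap.quotKerEquivRange_apply_mk d10 y)
    have hes : e.symm ⟨d10 y, hy'⟩ = Submodule.Quotient.mk y := by
      rw [← he, e.symm_apply_apply]
    calc g (d10 y) = h₂ ⟨d10 y, hy⟩ := hg ⟨d10 y, hy⟩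
      _ = h₁ ⟨d10 y, hy'⟩ := rfl
      _ = h₀ (e.symm ⟨d10 y, hy'⟩) := rfl
      _ = h₀ (Submodule.Quotient.mk y) := by rw [hes]
      _ = f.hom y := Submodule.liftQ_apply _ _ _


end Bridge

section Contra
variable {R U : Type u} [Ring R] [Ring U] (u : R →+* U) [Module R U]
variable {M : Type u} [AddCommGroup M] [Module R M]
lemma hom_vanish (hsmulU : ∀ (r : R) (x : U), r • x = u r * x) (hU : Subsingleton (U →ₗ[R] M))
    {W : Type u} [AddCommGroup W] [Module U W] [Module R W]
    (hW : ∀ (r : R) (w : W), r • w = u r • w) (f : W →ₗ[R] M) : f = 0 := by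
  ext w
  let φ : U →ₗ[R] M :=
    { toFun := fun x => f (x • w)
      map_add' := fun x y => by
        show f ((x + y) • w) = f (x • w) + f (y • w)
        rw [add_smul, map_add]
      map_smul' := fun r x => by
        show f ((r • x) • w) = r • f (x • w)
        rw [hsmulU, mul_smul, ← hW, map_smul] }
  have hφ : φ = 0 := Subsingleton.elim _ _
  have h1 : f w = φ 1 := by
    show f w = f ((1 : U) • w)
    rw [one_smul]
  rw [LinearMap.zero_apply, h1, hφ, LinearMap.zero_apply]

variable {Z : Type u} [AddCommGroup Z] [Module U Z] [Module R Z]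

/-- `x ↦ x • z` as an `R`-linear map `U → Z`. -/
def smulMap (hsmulU : ∀ (r : R) (x : U), r • x = u r * x)
    (hZ : ∀ (r : R) (z : Z), r • z = u r • z) (z : Z) : U →ₗ[R] Z where
  toFun x := x • z
  map_add' x y := add_smul x y z
  map_smul' r x := by
    show (r • x) • z = r • (x • z)
    rw [hsmulU, mul_smul, ← hZ]

variable (hsmulU : ∀ (r : R) (x : U), r • x = u r * x)
variable (hZ : ∀ (r : R) (z : Z), r • z = u r • z)

/-- The `R`-linear surjection `(Z →₀ U) → Z`. -/
def eps : (Z →₀ U) →ₗ[R] Z := Finsupp.lsum ℕ (fun z => smulMap u hsmulU hZ z)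

lemma eps_single (z : Z) (x : U) : eps u hsmulU hZ (Finsupp.single z x) = x • z := by
  simp [eps, smulMap]

lemma eps_surjective : Function.Surjective (eps u hsmulU hZ) := by
  intro z
  exact ⟨Finsupp.single z 1, by rw [eps_single, one_smul]⟩

lemma eps_smul (x : U) (v : Z →₀ U) :
    eps u hsmulU hZ (x • v) = x • eps u hsmulU hZ v := by
  induction v using Finsupp.induction with
  | zero => rw [smul_zero, map_zero, smul_zero]
  | single_add a b v _ _ ih =>
    rw [smul_add, map_add, map_add, ih, Finsupp.smul_single, eps_single, eps_single,
      smul_add, smul_eq_mul, mul_smul]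

lemma finsupp_smul_compat (hsmulU : ∀ (r : R) (x : U), r • x = u r * x)
    (r : R) (v : Z →₀ U) : r • v = (u r • v : Z →₀ U) := by
  ext x
  rw [Finsupp.smul_apply, Finsupp.smul_apply, hsmulU, smul_eq_mul]

lemma ker_eps_hom_vanish (hU : Subsingleton (U →ₗ[R] M))
    (f : ↥(LinearMap.ker (eps u hsmulU hZ)) →ₗ[R] M) : f = 0 := by
  letI : SMul U ↥(LinearMap.ker (eps u hsmulU hZ)) :=
    ⟨fun x w => ⟨x • w.1, by
      rw [LinearMap.mem_ker, eps_smul, LinearMap.mem_ker.mp w.2, smul_zero]⟩⟩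
  have hval : ∀ (x : U) (w : ↥(LinearMap.ker (eps u hsmulU hZ))), (x • w).1 = x • w.1 :=
    fun _ _ => rfl
  letI : Module U ↥(LinearMap.ker (eps u hsmulU hZ)) :=
    { one_smul := fun w => Subtype.ext (by rw [hval, one_smul])
      mul_smul := fun x y w => Subtype.ext (by rw [hval, hval, hval, mul_smul])
      smul_zero := fun x => Subtype.ext (by rw [hval]; exact smul_zero x)
      smul_add := fun x w₁ w₂ => Subtype.ext (by
        rw [hval]
        show x • (w₁.1 + w₂.1) = (x • w₁).1 + (x • w₂).1
        rw [hval, hval, smul_add])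
      add_smul := fun x y w => Subtype.ext (by
        rw [hval]
        show (x + y) • w.1 = (x • w).1 + (y • w).1
        rw [hval, hval, add_smul])
      zero_smul := fun w => Subtype.ext (by rw [hval]; exact zero_smul U w.1) }
  have hW : ∀ (r : R) (w : ↥(LinearMap.ker (eps u hsmulU hZ))), r • w = u r • w := by
    intro r w
    apply Subtype.ext
    rw [hval]
    show r • w.1 = u r • w.1
    exact finsupp_smul_compat (Z := Z) u hsmulU r w.1
  exact hom_vanish (W := ↥(LinearMap.ker (eps u hsmulU hZ))) u hsmulU hU hW f


end Contra

end Stmt10Aux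

set_option maxHeartbeats 1000000 in
/-- let `u : R → U` be a ring epimorphism and `M` a `u`-contramodule
(`Hom_R(U, M) = 0 = Ext¹_R(U, M)`). Then `Hom_R(Z, M) = 0 = Ext¹_R(Z, M)` for every
`R`-module `Z` whose `R`-action comes from a `U`-module structure via `u`. -/
theorem stmt10 {R : Type u} [Ring R] {U : Type u} [Ring U] (u : R →+* U)
    [Module R U] (hsmulU : ∀ (r : R) (x : U), r • x = u r * x)
    (hepi : ∀ (T : Type u) [Ring T] (f g : U →+* T), f.comp u = g.comp u → f = g)
    (M : Type u) [AddCommGroup M] [Module R M]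
    (hM : Subsingleton (U →ₗ[R] M) ∧
      Subsingleton (ext1 R (ModuleCat.of R U) (ModuleCat.of R M)))
    (Z : Type u) [AddCommGroup Z] [Module U Z] [Module R Z]
    (hZ : ∀ (r : R) (z : Z), r • z = u r • z) :
    Subsingleton (Z →ₗ[R] M) ∧
      Subsingleton (ext1 R (ModuleCat.of R Z) (ModuleCat.of R M)) := by
  obtain ⟨hU1, hU2⟩ := hM
  constructor
  · exact ⟨fun f g => by
      rw [hom_vanish u hsmulU hU1 hZ f, hom_vanish u hsmulU hU1 hZ g]⟩
  · let PU : CategoryTheory.ProjectiveResolution (ModuleCat.of R U) :=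
      CategoryTheory.ProjectiveResolution.of _
    haveI hprojU : Module.Projective R ↑(PU.complex.X 0) :=
      (IsProjective.iff_projective _).mpr (PU.projective 0)
    have hCanU : CanExt M (aug PU) := (subsingleton_ext1_iff_s10 PU).mp hU2
    have hq : Function.Surjective (Finsupp.linearCombination R (id : U → U)) :=
      Finsupp.linearCombination_id_surjective R U
    have hCanFree : CanExt M (Finsupp.linearCombination R (id : U → U)) :=
      CanExt.transfer hq (aug_surjective PU) hCanU
    have hCanσ : CanExt (A := Z →₀ (U →₀ R)) (B := Z →₀ U) M (Finsupp.mapRange.linearMap (α := Z)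
        (Finsupp.linearCombination R (id : U → U))) := canExt_mapRange (ι := Z) hCanFree
    have hσs := mapRange_surj (ι := Z) hq
    have hCanρ : CanExt M ((eps u hsmulU hZ).comp (Finsupp.mapRange.linearMap (α := Z)
        (Finsupp.linearCombination R (id : U → U)))) :=
      canExt_comp (G := Z →₀ (U →₀ R)) (F := Z →₀ U) _ _ hσs hCanσ (fun f => ker_eps_hom_vanish u hsmulU hZ hU1 f)
    have hρs : Function.Surjective ((eps u hsmulU hZ).comp (Finsupp.mapRange.linearMap (α := Z)
        (Finsupp.linearCombination R (id : U → U)))) :=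
      (eps_surjective u hsmulU hZ).comp hσs
    let PZ : CategoryTheory.ProjectiveResolution (ModuleCat.of R Z) :=
      CategoryTheory.ProjectiveResolution.of _
    haveI : Module.Projective R ↑(PZ.complex.X 0) :=
      (IsProjective.iff_projective _).mpr (PZ.projective 0)
    have hCanZ : CanExt M (aug PZ) := CanExt.transfer (aug_surjective PZ) hρs hCanρ
    exact (subsingleton_ext1_iff_s10 PZ).mpr hCanZ

end
end
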